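/- Let F : ℝⁿ → ℝ be differentiable with ℓ-Lipschitz gradient, bounded below by F(x*), and suppose x_{t+1} = x_t - (1/ℓ) q_t for vectors q_t. Then Σ_{t=0}^{T} (1/(4ℓ))‖∇F(x_t)‖² ≤ F(x₀) - F(x*) + (1/ℓ) Σ_{t=0}^{T} (1/4)‖q_t - ∇F(x_t)‖². -/

import Mathlib

open Finset RealInnerProductSpace

lemma descent_aux {n : ℕ} (F : EuclideanSpace ℝ (Fin n) → ℝ)
    (ℓ : ℝ) (hℓ : 0 < ℓ) (hdiff : Differentiable ℝ F)
    (hlip : ∀ u v : EuclideanSpace ℝ (Fin n),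
      ‖gradient F u - gradient F v‖ ≤ ℓ * ‖u - v‖)
    (u v : EuclideanSpace ℝ (Fin n)) :
    F (u + v) ≤ F u + ⟪gradient F u, v⟫ + ℓ / 2 * ‖v‖ ^ 2 := by
  set φ : ℝ → ℝ := fun t => F (u + t • v) - t * ⟪gradient F u, v⟫ - ℓ / 2 * t ^ 2 * ‖v‖ ^ 2
    with hφ
  have hderiv : ∀ t : ℝ, HasDerivAt φ
      (⟪gradient F (u + t • v), v⟫ - ⟪gradient F u, v⟫ - ℓ * t * ‖v‖ ^ 2) t := by
    intro t
    have hline : HasDerivAt (fun t : ℝ => u + t • v) v t := by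
      simpa using ((hasDerivAt_id t).smul_const v).const_add u
    have h1 : HasDerivAt (fun t : ℝ => F (u + t • v)) ⟪gradient F (u + t • v), v⟫ t := by
      have hF := ((hdiff (u + t • v)).hasGradientAt).hasFDerivAt
      have := hF.comp_hasDerivAt t hline
      simp at this ⊢; exact this
    have h2 : HasDerivAt (fun t : ℝ => t * ⟪gradient F u, v⟫) ⟪gradient F u, v⟫ t := by
      simpa using (hasDerivAt_id t).mul_const ⟪gradient F u, v⟫
    have h3 : HasDerivAt (fun t : ℝ => ℓ / 2 * t ^ 2 * ‖v‖ ^ 2) (ℓ * t * ‖v‖ ^ 2) t := by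
      have : HasDerivAt (fun t : ℝ => t ^ 2) (2 * t) t := by
        simpa using hasDerivAt_pow 2 t
      have := (this.const_mul (ℓ / 2)).mul_const (‖v‖ ^ 2)
      convert this using 1
      · rfl
      · rfl
      · ring
    have := (h1.sub h2).sub h3
    exact this
  have hanti : AntitoneOn φ (Set.Icc (0 : ℝ) 1) := by
    apply antitoneOn_of_deriv_nonpos (convex_Icc 0 1)
    · exact Continuous.continuousOn (by
        have : Continuous φ := by
          have : Differentiable ℝ φ := fun t => (hderiv t).differentiableAt
          exact this.continuous
        exact this)
    · intro t _
      exact (hderiv t).differentiableAt.differentiableWithinAt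
    · intro t ht
      rw [interior_Icc] at ht
      rw [(hderiv t).deriv]
      have hb : ⟪gradient F (u + t • v) - gradient F u, v⟫ ≤ ℓ * t * ‖v‖ ^ 2 := by
        calc ⟪gradient F (u + t • v) - gradient F u, v⟫
            ≤ ‖gradient F (u + t • v) - gradient F u‖ * ‖v‖ := real_inner_le_norm _ _
          _ ≤ (ℓ * ‖(u + t • v) - u‖) * ‖v‖ := by
              gcongr; exact hlip _ _
          _ = ℓ * t * ‖v‖ ^ 2 := by
              have : ‖(u + t • v) - u‖ = |t| * ‖v‖ := by
                simp [norm_smul, Real.norm_eq_abs]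
              rw [this, abs_of_pos ht.1]; ring
      rw [inner_sub_left] at hb
      linarith
  have key := hanti (Set.mem_Icc.2 ⟨le_refl 0, zero_le_one⟩)
      (Set.mem_Icc.2 ⟨zero_le_one, le_refl 1⟩) zero_le_one
  simp only [hφ, one_smul, zero_smul, add_zero, one_pow, one_mul, zero_pow, mul_zero,
    zero_mul, sub_zero] at key
  linarith

theorem stmt_7 {n : ℕ} (F : EuclideanSpace ℝ (Fin n) → ℝ)
    (ℓ : ℝ) (hℓ : 0 < ℓ) (hdiff : Differentiable ℝ F)
    (hlip : ∀ u v : EuclideanSpace ℝ (Fin n),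
      ‖gradient F u - gradient F v‖ ≤ ℓ * ‖u - v‖)
    (xstar : EuclideanSpace ℝ (Fin n)) (hlb : ∀ x, F xstar ≤ F x)
    (x q : ℕ → EuclideanSpace ℝ (Fin n))
    (hupd : ∀ t, x (t + 1) = x t - (1 / ℓ) • q t) (T : ℕ) :
    ∑ t ∈ range (T + 1), (1 / (4 * ℓ)) * ‖gradient F (x t)‖ ^ 2 ≤
      F (x 0) - F xstar +
        (1 / ℓ) * ∑ t ∈ range (T + 1), (1 / 4) * ‖q t - gradient F (x t)‖ ^ 2 := by
  -- one-step bound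
  have step : ∀ t, F (x (t + 1)) ≤ F (x t)
      - (1 / (2 * ℓ)) * ‖gradient F (x t)‖ ^ 2
      + (1 / (2 * ℓ)) * ‖q t - gradient F (x t)‖ ^ 2 := by
    intro t
    have h := descent_aux F ℓ hℓ hdiff hlip (x t) (-((1 / ℓ) • q t))
    have hx : x (t + 1) = x t + -((1 / ℓ) • q t) := by rw [hupd t]; abel
    rw [← hx] at h
    set g := gradient F (x t)
    have hqg : ‖q t - g‖ ^ 2 = ‖q t‖ ^ 2 - 2 * ⟪q t, g⟫ + ‖g‖ ^ 2 := by
      rw [@norm_sub_sq_real]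
    have hinner : ⟪g, -((1 / ℓ) • q t)⟫ = -(1 / ℓ) * ⟪q t, g⟫ := by
      rw [inner_neg_right, real_inner_smul_right, real_inner_comm]; ring
    have hnorm : ‖-((1 / ℓ) • q t)‖ ^ 2 = (1 / ℓ) ^ 2 * ‖q t‖ ^ 2 := by
      rw [norm_neg, norm_smul, Real.norm_eq_abs, mul_pow, sq_abs]
    rw [hinner, hnorm] at h
    have hℓ' : ℓ ≠ 0 := ne_of_gt hℓ
    calc F (x (t + 1)) ≤ F (x t) + -(1 / ℓ) * ⟪q t, g⟫ + ℓ / 2 * ((1 / ℓ) ^ 2 * ‖q t‖ ^ 2) := h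
      _ = F (x t) - (1 / (2 * ℓ)) * ‖g‖ ^ 2 + (1 / (2 * ℓ)) * ‖q t - g‖ ^ 2 := by
          rw [hqg]; field_simp; ring
  -- telescoping sum
  have tele : ∀ S : ℕ, ∑ t ∈ range S,
      ((1 / (2 * ℓ)) * ‖gradient F (x t)‖ ^ 2
        - (1 / (2 * ℓ)) * ‖q t - gradient F (x t)‖ ^ 2) ≤ F (x 0) - F (x S) := by
    intro S
    induction S with
    | zero => simp
    | succ S ih =>
      rw [sum_range_succ]
      have := step S
      linarith
  have hD : 0 ≤ F (x 0) - F xstar := by linarith [hlb (x 0)]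
  have hD2 : ∑ t ∈ range (T + 1),
      ((1 / (2 * ℓ)) * ‖gradient F (x t)‖ ^ 2
        - (1 / (2 * ℓ)) * ‖q t - gradient F (x t)‖ ^ 2) ≤ F (x 0) - F xstar := by
    calc _ ≤ F (x 0) - F (x (T + 1)) := tele (T + 1)
      _ ≤ F (x 0) - F xstar := by linarith [hlb (x (T + 1))]
  set A := ∑ t ∈ range (T + 1), ‖gradient F (x t)‖ ^ 2 with hA
  set B := ∑ t ∈ range (T + 1), ‖q t - gradient F (x t)‖ ^ 2 with hB
  have hA0 : 0 ≤ A := sum_nonneg fun t _ => sq_nonneg _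
  have hB0 : 0 ≤ B := sum_nonneg fun t _ => sq_nonneg _
  have hsum1 : ∑ t ∈ range (T + 1), (1 / (4 * ℓ)) * ‖gradient F (x t)‖ ^ 2
      = (1 / (4 * ℓ)) * A := by rw [hA, mul_sum]
  have hsum2 : ∑ t ∈ range (T + 1), (1 / 4) * ‖q t - gradient F (x t)‖ ^ 2
      = (1 / 4) * B := by rw [hB, mul_sum]
  have hsum3 : ∑ t ∈ range (T + 1),
      ((1 / (2 * ℓ)) * ‖gradient F (x t)‖ ^ 2
        - (1 / (2 * ℓ)) * ‖q t - gradient F (x t)‖ ^ 2)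
      = (1 / (2 * ℓ)) * A - (1 / (2 * ℓ)) * B := by
    rw [sum_sub_distrib, hA, hB, mul_sum, mul_sum]
  rw [hsum1, hsum2]
  rw [hsum3] at hD2
  have heq : (1 / (4 * ℓ)) * A - (1 / (4 * ℓ)) * B
      = (1 / 2) * ((1 / (2 * ℓ)) * A - (1 / (2 * ℓ)) * B) := by ring
  have h5 : (1 / ℓ) * ((1 / 4) * B) = (1 / (4 * ℓ)) * B := by ring
  rw [h5]
  linarith [hD2, hD, heq]
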